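/- Theorem 9.1. For the dyadic square function S(f)(x) := ( Σ_{I∈𝒟 : x∈I} |⟨f⟩_{I_-} − ⟨f⟩_{I_+}|² )^{1/2}, the following are equivalent: (a) there exists C such that ∫ S(f)(x)² v(x) dx ≤ C ∫ |f|² w^{-1} dx for every measurable f with ∫ |f|² w^{-1} dx < ∞; (b) there exists A such that both the joint A₂ condition ⟨v⟩_I ⟨w⟩_I ≤ A for every I ∈ 𝒟, and the condition (1/|J|) Σ_{I⊆J, I∈𝒟} |⟨w⟩_{I_-} − ⟨w⟩_{I_+}|² ⟨v⟩_I |I| ≤ A ⟨w⟩_J for every J ∈ 𝒟, hold. -/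

import Mathlib

/-!
Theorem 9.1: the dyadic square function `S` is bounded from `L²(w⁻¹)` to
`L²(v)` iff the joint A₂ condition (1.1) and the Carleson condition (1.2)
hold.
-/

open MeasureTheory Set
open scoped ENNReal Classical

noncomputable section

/-- The dyadic interval `[k/2^n, (k+1)/2^n)`. -/
def dyad (n k : ℕ) : Set ℝ := Set.Ico ((k : ℝ) / 2 ^ n) (((k : ℝ) + 1) / 2 ^ n)

/-- The length of a dyadic interval of generation `n`. -/
def dlen (n : ℕ) : ℝ := ((1 : ℝ) / 2) ^ n

/-- The average `⟨u⟩_I` of `u` over the dyadic interval `I = dyad n k`. -/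
def davg (u : ℝ → ℝ) (n k : ℕ) : ℝ := (2 : ℝ) ^ n * ∫ x in dyad n k, u x

/-- A weight: integrable on `[0,1)` and a.e. positive there. -/
def IsWeight (u : ℝ → ℝ) : Prop :=
  IntegrableOn u (Set.Ico (0 : ℝ) 1) ∧
    ∀ᵐ x ∂(volume.restrict (Set.Ico (0 : ℝ) 1)), 0 < u x

/-- The square of the dyadic square function:
`S(f)(x)² = Σ_{I∋x} |⟨f⟩_{I_-} - ⟨f⟩_{I_+}|²`, valued in `ℝ≥0∞`. -/
def Ssq (f : ℝ → ℝ) (x : ℝ) : ℝ≥0∞ :=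
  ∑' p : ℕ × ℕ,
    if p.2 < 2 ^ p.1 ∧ x ∈ dyad p.1 p.2 then
      ENNReal.ofReal ((davg f (p.1 + 1) (2 * p.2) - davg f (p.1 + 1) (2 * p.2 + 1)) ^ 2)
    else 0

namespace Aux91

/-- integral over a dyadic interval -/
def sint (u : ℝ → ℝ) (n k : ℕ) : ℝ := ∫ x in dyad n k, u x

lemma dyad_zero : dyad 0 0 = Set.Ico (0:ℝ) 1 := by
  simp [dyad]

lemma measurableSet_dyad (n k : ℕ) : MeasurableSet (dyad n k) :=
  measurableSet_Ico

lemma dyad_subset {n k : ℕ} (h : k < 2 ^ n) : dyad n k ⊆ Set.Ico (0:ℝ) 1 := by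
  have h2 : (0:ℝ) < 2 ^ n := by positivity
  have hk : (k:ℝ) + 1 ≤ 2 ^ n := by
    have : ((k:ℝ) + 1) ≤ ((2^n : ℕ) : ℝ) := by exact_mod_cast h
    simpa using this
  intro x hx
  rcases hx with ⟨h1, h2'⟩
  constructor
  · exact le_trans (by positivity) h1
  · calc x < ((k:ℝ)+1)/2^n := h2'
      _ ≤ (2:ℝ)^n / 2^n := by gcongr
      _ = 1 := by field_simp

lemma dyad_split (n k : ℕ) :
    dyad n k = dyad (n+1) (2*k) ∪ dyad (n+1) (2*k+1) := by
  have h2 : (0:ℝ) < 2 ^ n := by positivity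
  have e1 : ((2*k : ℕ) : ℝ) / 2 ^ (n+1) = (k:ℝ) / 2^n := by
    push_cast; rw [pow_succ]; field_simp
  have e2 : (((2*k : ℕ) : ℝ) + 1) / 2 ^ (n+1) = ((2*k+1 : ℕ) : ℝ) / 2 ^ (n+1) := by
    push_cast; ring_nf
  have e3 : (((2*k+1 : ℕ) : ℝ) + 1) / 2 ^ (n+1) = ((k:ℝ)+1) / 2^n := by
    push_cast; rw [pow_succ]; field_simp; ring
  unfold dyad
  rw [e1, e2, e3, Set.Ico_union_Ico_eq_Ico]
  · rw [← e1, ← e2]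
    apply div_le_div_of_nonneg_right _ (by positivity)
    push_cast; linarith
  · rw [← e2, ← e3]
    apply div_le_div_of_nonneg_right _ (by positivity)
    push_cast; linarith

lemma dyad_disj (n k : ℕ) : Disjoint (dyad (n+1) (2*k)) (dyad (n+1) (2*k+1)) := by
  have e2 : (((2*k : ℕ) : ℝ) + 1) / 2 ^ (n+1) = ((2*k+1 : ℕ) : ℝ) / 2 ^ (n+1) := by
    push_cast; ring_nf
  unfold dyad
  rw [e2]
  exact Set.Ico_disjoint_Ico_same

lemma dyad_desc_subset {e i : ℕ} (n k : ℕ) (h : i < 2 ^ e) :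
    dyad (n+e) (2^e*k+i) ⊆ dyad n k := by
  have hi : (i:ℝ) + 1 ≤ 2 ^ e := by
    have : ((i:ℝ) + 1) ≤ ((2^e : ℕ) : ℝ) := by exact_mod_cast h
    simpa using this
  unfold dyad
  apply Set.Ico_subset_Ico
  · rw [div_le_div_iff₀ (by positivity) (by positivity)]
    push_cast
    rw [pow_add]
    nlinarith [pow_pos (zero_lt_two' ℝ) n, pow_pos (zero_lt_two' ℝ) e,
      Nat.cast_nonneg (α := ℝ) i, Nat.cast_nonneg (α := ℝ) k]
  · rw [div_le_div_iff₀ (by positivity) (by positivity)]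
    push_cast
    rw [pow_add]
    nlinarith [pow_pos (zero_lt_two' ℝ) n, pow_pos (zero_lt_two' ℝ) e,
      Nat.cast_nonneg (α := ℝ) k]

lemma volume_dyad (n k : ℕ) : volume (dyad n k) = ENNReal.ofReal (dlen n) := by
  rw [dyad, Real.volume_Ico, dlen]
  congr 1
  have h2 : (0:ℝ) < 2 ^ n := by positivity
  field_simp
  rw [← mul_pow]; norm_num

lemma dlen_pos (n : ℕ) : 0 < dlen n := by unfold dlen; positivity

lemma dyad_half_left (n k : ℕ) : dyad (n+1) (2*k) ⊆ dyad n k := by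
  have := dyad_desc_subset (e := 1) (i := 0) n k (by norm_num)
  simpa using this

lemma dyad_half_right (n k : ℕ) : dyad (n+1) (2*k+1) ⊆ dyad n k := by
  have := dyad_desc_subset (e := 1) (i := 1) n k (by norm_num)
  simpa using this

end Aux91

namespace Aux91

variable {u f v w : ℝ → ℝ}

lemma valid_left {n k : ℕ} (h : k < 2^n) : 2*k < 2^(n+1) := by
  have : 2*k < 2*2^n := by omega
  simpa [pow_succ, Nat.mul_comm] using this

lemma valid_right {n k : ℕ} (h : k < 2^n) : 2*k+1 < 2^(n+1) := by
  have : 2*k+1 < 2*2^n := by omega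
  simpa [pow_succ, Nat.mul_comm] using this

lemma integrableOn_dyad (hu : IntegrableOn u (Set.Ico (0:ℝ) 1)) {n k : ℕ} (h : k < 2^n) :
    IntegrableOn u (dyad n k) :=
  hu.mono_set (dyad_subset h)

lemma sint_split (hu : IntegrableOn u (Set.Ico (0:ℝ) 1)) {n k : ℕ} (h : k < 2^n) :
    sint u n k = sint u (n+1) (2*k) + sint u (n+1) (2*k+1) := by
  unfold sint
  rw [dyad_split n k]
  exact setIntegral_union (dyad_disj n k) (measurableSet_dyad _ _)
    (integrableOn_dyad hu (valid_left h)) (integrableOn_dyad hu (valid_right h))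

lemma davg_dlen (u : ℝ → ℝ) (n k : ℕ) : davg u n k * dlen n = sint u n k := by
  unfold davg dlen sint
  have h2 : (0:ℝ) < 2 ^ n := by positivity
  rw [div_pow, one_pow]
  field_simp

lemma davg_eq (u : ℝ → ℝ) (n k : ℕ) : davg u n k = 2^n * sint u n k := rfl

lemma ae_pos_dyad (hw : IsWeight w) {n k : ℕ} (h : k < 2^n) :
    ∀ᵐ x ∂(volume.restrict (dyad n k)), 0 < w x :=
  ae_restrict_of_ae_restrict_of_subset (dyad_subset h) hw.2

lemma ae_nonneg_dyad (hw : IsWeight w) {n k : ℕ} (h : k < 2^n) :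
    0 ≤ᵐ[volume.restrict (dyad n k)] w :=
  (ae_pos_dyad hw h).mono fun _ hx => le_of_lt hx

lemma sint_nonneg (hw : IsWeight w) {n k : ℕ} (h : k < 2^n) : 0 ≤ sint w n k :=
  setIntegral_nonneg_of_ae_restrict (ae_nonneg_dyad hw h)

lemma sint_pos (hw : IsWeight w) {n k : ℕ} (h : k < 2^n) : 0 < sint w n k := by
  unfold sint
  rw [setIntegral_pos_iff_support_of_nonneg_ae (ae_nonneg_dyad hw h)
    (integrableOn_dyad hw.1 h)]
  have hT : volume ({x | ¬ 0 < w x} ∩ dyad n k) = 0 := by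
    have := ae_pos_dyad hw (n := n) (k := k) h
    rw [ae_iff, Measure.restrict_apply' (measurableSet_dyad n k)] at this
    exact this
  have hsub : dyad n k ⊆ (Function.support w ∩ dyad n k) ∪ ({x | ¬ 0 < w x} ∩ dyad n k) := by
    intro x hx
    by_cases hw0 : w x = 0
    · exact Or.inr ⟨by simp [hw0], hx⟩
    · exact Or.inl ⟨hw0, hx⟩
  have hvol : volume (dyad n k) ≤ volume (Function.support w ∩ dyad n k) := by
    calc volume (dyad n k) ≤ volume ((Function.support w ∩ dyad n k) ∪ ({x | ¬ 0 < w x} ∩ dyad n k)) :=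
          measure_mono hsub
      _ ≤ volume (Function.support w ∩ dyad n k) + volume ({x | ¬ 0 < w x} ∩ dyad n k) :=
          measure_union_le _ _
      _ = volume (Function.support w ∩ dyad n k) := by rw [hT, add_zero]
  calc (0:ℝ≥0∞) < volume (dyad n k) := by
        rw [volume_dyad]; exact ENNReal.ofReal_pos.mpr (dlen_pos n)
    _ ≤ _ := hvol

lemma davg_pos (hw : IsWeight w) {n k : ℕ} (h : k < 2^n) : 0 < davg w n k := by
  rw [davg_eq]
  have := sint_pos hw h
  positivity

end Aux91

namespace Aux91

/-- Sum of `g` over descendants of `(n,k)` up to depth `d`. -/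
def Sdesc (g : ℕ → ℕ → ℝ) : ℕ → ℕ → ℕ → ℝ
  | 0, n, k => g n k
  | (d+1), n, k => g n k + Sdesc g d (n+1) (2*k) + Sdesc g d (n+1) (2*k+1)

/-- The finset of descendants of `(n,k)` up to depth `d`. -/
def DF : ℕ → ℕ → ℕ → Finset (ℕ × ℕ)
  | 0, n, k => {(n,k)}
  | (d+1), n, k => {(n,k)} ∪ (DF d (n+1) (2*k) ∪ DF d (n+1) (2*k+1))

lemma mem_DF_level {d n k : ℕ} {p : ℕ × ℕ} (hp : p ∈ DF d n k) :
    n ≤ p.1 ∧ p.1 ≤ n + d := by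
  induction d generalizing n k with
  | zero => simp [DF] at hp; subst hp; omega
  | succ d ih =>
    simp only [DF, Finset.mem_union, Finset.mem_singleton] at hp
    rcases hp with h | h | h
    · subst h; omega
    · have := ih h; omega
    · have := ih h; omega

lemma mem_DF_subset {d n k : ℕ} {p : ℕ × ℕ} (hp : p ∈ DF d n k) :
    dyad p.1 p.2 ⊆ dyad n k := by
  induction d generalizing n k with
  | zero => simp [DF] at hp; subst hp; rfl
  | succ d ih =>
    simp only [DF, Finset.mem_union, Finset.mem_singleton] at hp
    rcases hp with h | h | h
    · subst h; rfl
    · exact (ih h).trans (dyad_half_left n k)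
    · exact (ih h).trans (dyad_half_right n k)

lemma mem_DF_valid {d n k : ℕ} (hk : k < 2^n) {p : ℕ × ℕ} (hp : p ∈ DF d n k) :
    p.2 < 2 ^ p.1 := by
  induction d generalizing n k with
  | zero => simp [DF] at hp; subst hp; exact hk
  | succ d ih =>
    simp only [DF, Finset.mem_union, Finset.mem_singleton] at hp
    rcases hp with h | h | h
    · subst h; exact hk
    · exact ih (valid_left hk) h
    · exact ih (valid_right hk) h

lemma dyad_nonempty (n k : ℕ) : (dyad n k).Nonempty := by
  refine ⟨(k:ℝ)/2^n, le_refl _, ?_⟩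
  apply div_lt_div_of_pos_right (by linarith) (by positivity)

lemma DF_disj (d n k : ℕ) : Disjoint (DF d (n+1) (2*k)) (DF d (n+1) (2*k+1)) := by
  rw [Finset.disjoint_left]
  intro p hp hp'
  have h1 := mem_DF_subset hp
  have h2 := mem_DF_subset hp'
  have := dyad_disj n k
  have hne := dyad_nonempty p.1 p.2
  rcases hne with ⟨x, hx⟩
  exact (Set.disjoint_left.mp this (h1 hx)) (h2 hx)

lemma root_notmem {d n k m : ℕ} {p : ℕ × ℕ} (hp : p ∈ DF d (n+1) m) : p ≠ (n, k) := by
  have := mem_DF_level hp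
  intro h; subst h; omega

lemma Sdesc_eq_sum (g : ℕ → ℕ → ℝ) (d n k : ℕ) :
    Sdesc g d n k = ∑ p ∈ DF d n k, g p.1 p.2 := by
  induction d generalizing n k with
  | zero => simp [Sdesc, DF]
  | succ d ih =>
    have hdisj : Disjoint (DF d (n+1) (2*k)) (DF d (n+1) (2*k+1)) := DF_disj d n k
    have hroot : (n,k) ∉ DF d (n+1) (2*k) ∪ DF d (n+1) (2*k+1) := by
      intro h
      rcases Finset.mem_union.mp h with h | h
      · exact root_notmem h rfl
      · exact root_notmem h rfl
    rw [show DF (d+1) n k = {(n,k)} ∪ (DF d (n+1) (2*k) ∪ DF d (n+1) (2*k+1)) from rfl]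
    rw [Finset.sum_union (by simpa using hroot), Finset.sum_union hdisj, Finset.sum_singleton]
    simp [Sdesc, ih]
    ring

lemma mem_DF_of_desc {d e i n k : ℕ} (hed : e ≤ d) (hi : i < 2^e) :
    (n + e, 2^e * k + i) ∈ DF d n k := by
  induction d generalizing e i n k with
  | zero =>
    interval_cases e
    simp_all [DF]
  | succ d ih =>
    rcases Nat.eq_zero_or_pos e with he | he
    · subst he
      interval_cases i
      simp [DF]
    · obtain ⟨e', rfl⟩ := Nat.exists_eq_succ_of_ne_zero (Nat.pos_iff_ne_zero.mp he)
      simp only [DF, Finset.mem_union, Finset.mem_singleton]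
      by_cases hlt : i < 2^e'
      · refine Or.inr (Or.inl ?_)
        have h := ih (e := e') (i := i) (n := n+1) (k := 2*k) (by omega) hlt
        have heq : (n + (e'+1), 2^(e'+1)*k + i) = ((n+1) + e', 2^e'*(2*k) + i) := by
          rw [Prod.mk.injEq]
          exact ⟨by omega, by rw [pow_succ]; ring_nf⟩
        rw [heq]; exact h
      · refine Or.inr (Or.inr ?_)
        have h2 : 2^e' ≤ i := by omega
        have hi' : i - 2^e' < 2^e' := by
          have : i < 2^(e'+1) := hi
          rw [pow_succ] at this; omega
        have h := ih (e := e') (i := i - 2^e') (n := n+1) (k := 2*k+1) (by omega) hi'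
        have key : 2^e'*(2*k+1) + (i - 2^e') = 2^(e'+1)*k + i := by
          have h3 : 2^e' * (2*k+1) = 2^(e'+1)*k + 2^e' := by rw [pow_succ]; ring
          rw [h3, Nat.add_assoc, Nat.add_sub_cancel' h2]
        have heq : (n + (e'+1), 2^(e'+1)*k + i) = ((n+1) + e', 2^e'*(2*k+1) + (i - 2^e')) := by
          rw [Prod.mk.injEq]
          exact ⟨by omega, key.symm⟩
        rw [heq]; exact h

lemma mem_DF_root (N : ℕ) {p : ℕ × ℕ} (hval : p.2 < 2 ^ p.1) (hlev : p.1 ≤ N) :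
    p ∈ DF N 0 0 := by
  have := mem_DF_of_desc (d := N) (e := p.1) (i := p.2) (n := 0) (k := 0) hlev hval
  simpa using this

lemma Sdesc_nonneg {g : ℕ → ℕ → ℝ} (hg : ∀ n k, k < 2^n → 0 ≤ g n k)
    {d n k : ℕ} (hk : k < 2^n) : 0 ≤ Sdesc g d n k := by
  rw [Sdesc_eq_sum]
  exact Finset.sum_nonneg fun p hp => hg p.1 p.2 (mem_DF_valid hk hp)

lemma Sdesc_mono {g h : ℕ → ℕ → ℝ} {d n k : ℕ} (hk : k < 2^n)
    (hgh : ∀ n' k', k' < 2^n' → g n' k' ≤ h n' k') :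
    Sdesc g d n k ≤ Sdesc h d n k := by
  rw [Sdesc_eq_sum, Sdesc_eq_sum]
  exact Finset.sum_le_sum fun p hp => hgh p.1 p.2 (mem_DF_valid hk hp)

lemma Sdesc_add (g h : ℕ → ℕ → ℝ) (d n k : ℕ) :
    Sdesc (fun n k => g n k + h n k) d n k = Sdesc g d n k + Sdesc h d n k := by
  simp [Sdesc_eq_sum, Finset.sum_add_distrib]

/-- convexity of x²/t -/
lemma sq_div_add (a b s t : ℝ) (hs : 0 < s) (ht : 0 < t) :
    (a+b)^2/(s+t) ≤ a^2/s + b^2/t := by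
  rw [div_add_div _ _ (ne_of_gt hs) (ne_of_gt ht),
    div_le_div_iff₀ (by positivity) (by positivity)]
  nlinarith [sq_nonneg (a*t - b*s)]

/-- quadratic trick for Cauchy–Schwarz -/
lemma quad_aux {a F m : ℝ} (hF : 0 ≤ F) (hm : 0 ≤ m)
    (h : ∀ t : ℝ, 0 < t → 2 * |a| * t ≤ t^2*F + m) : a^2 ≤ F*m := by
  rcases (abs_nonneg a).eq_or_lt with h0 | h0
  · have ha : a = 0 := abs_eq_zero.mp h0.symm
    subst ha
    simp only [ne_eq, zero_pow, OfNat.ofNat_ne_zero, not_false_eq_true]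
    positivity
  rcases hF.eq_or_lt with hF0 | hFpos
  · exfalso
    have ht := h ((m+1)/(2 * |a|)) (by positivity)
    rw [← hF0] at ht
    have hcon : m + 1 ≤ m := by
      calc m+1 = 2 * |a| * ((m+1)/(2 * |a|)) := by field_simp
        _ ≤ ((m+1)/(2 * |a|))^2*0 + m := ht
        _ = m := by ring
    linarith
  · have hne : F ≠ 0 := ne_of_gt hFpos
    have ht := h (|a|/F) (by positivity)
    have hmul := mul_le_mul_of_nonneg_right ht hFpos.le
    have e1 : 2 * |a| * (|a|/F) * F = 2*a^2 := by
      field_simp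
      linear_combination (sq_abs a)
    have epow : (|a|/F)^2 = a^2/F^2 := by rw [div_pow, sq_abs]
    have e2 : ((|a|/F)^2*F + m)*F = a^2 + m*F := by
      rw [epow]; field_simp
    rw [e1, e2] at hmul
    linarith

end Aux91

namespace Aux91

variable {f v w : ℝ → ℝ}

lemma ptwise_amgm (t : ℝ) (ht : 0 < t) {y W : ℝ} (hW : 0 < W) :
    2 * t * |y| ≤ t^2*(y^2/W) + W := by
  have key : 2 * t * |y| * W ≤ t^2*y^2 + W^2 := by
    nlinarith [sq_nonneg (t * |y| - W), sq_abs y]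
  have e : t^2*(y^2/W) + W - 2 * t * |y| = (t^2*y^2 + W^2 - 2 * t * |y| * W)/W := by
    field_simp
  nlinarith [div_nonneg (by linarith : (0:ℝ) ≤ t^2*y^2 + W^2 - 2 * t * |y| * W) hW.le]

lemma fsq_nonneg_ae (hw : IsWeight w) {n k : ℕ} (h : k < 2^n) :
    0 ≤ᵐ[volume.restrict (dyad n k)] (fun x => f x ^ 2 / w x) :=
  (ae_pos_dyad hw h).mono fun x hx => by positivity

lemma integrableOn_f (hw : IsWeight w) (hf : Measurable f)
    (hfi : IntegrableOn (fun x => f x ^ 2 / w x) (Set.Ico (0:ℝ) 1)) :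
    IntegrableOn f (Set.Ico (0:ℝ) 1) := by
  apply Integrable.mono' ((hfi.add hw.1).div_const 2)
    hf.aestronglyMeasurable.restrict
  refine hw.2.mono fun x hx => ?_
  have h1 := ptwise_amgm 1 one_pos (y := f x) hx
  simp only [Pi.add_apply, Real.norm_eq_abs]
  nlinarith [h1]

lemma sint_sq_le (hw : IsWeight w) (hf : Measurable f)
    (hfi : IntegrableOn (fun x => f x ^ 2 / w x) (Set.Ico (0:ℝ) 1)) {n k : ℕ} (h : k < 2^n) :
    (sint f n k)^2 ≤ sint (fun x => f x ^ 2 / w x) n k * sint w n k := by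
  have hFnn : 0 ≤ sint (fun x => f x ^ 2 / w x) n k :=
    setIntegral_nonneg_of_ae_restrict (fsq_nonneg_ae hw h)
  have hmnn : 0 ≤ sint w n k := sint_nonneg hw h
  apply quad_aux hFnn hmnn
  intro t ht
  have habs : |sint f n k| ≤ ∫ x in dyad n k, |f x| := by
    unfold sint
    have := norm_integral_le_integral_norm (μ := volume.restrict (dyad n k)) f
    simpa [Real.norm_eq_abs] using this
  have hfI : IntegrableOn f (dyad n k) := integrableOn_dyad (integrableOn_f hw hf hfi) h
  have hFI : IntegrableOn (fun x => f x ^ 2 / w x) (dyad n k) := integrableOn_dyad hfi h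
  have hwI : IntegrableOn w (dyad n k) := integrableOn_dyad hw.1 h
  have hmono : ∫ x in dyad n k, 2 * t * |f x| ≤ ∫ x in dyad n k, (t^2*(f x ^2 / w x) + w x) := by
    apply integral_mono_ae (by exact (hfI.abs.const_mul _)) (by exact (hFI.const_mul _).add hwI)
    exact (ae_pos_dyad hw h).mono fun x hx => ptwise_amgm t ht hx
  have e1 : ∫ x in dyad n k, 2 * t * |f x| = 2*t*∫ x in dyad n k, |f x| := by
    rw [integral_const_mul]
  have e2 : ∫ x in dyad n k, (t^2*(f x ^2 / w x) + w x)
      = t^2 * sint (fun x => f x ^ 2 / w x) n k + sint w n k := by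
    rw [integral_add (hFI.const_mul _) hwI, integral_const_mul]; rfl
  rw [e1, e2] at hmono
  have : 2 * |sint f n k| * t ≤ 2*t*∫ x in dyad n k, |f x| := by
    have habs' := mul_le_mul_of_nonneg_left habs (by linarith : (0:ℝ) ≤ 2*t)
    nlinarith
  linarith

end Aux91

namespace Aux91

variable {f v w : ℝ → ℝ}

/-- the difference of averages over the two halves -/
def Dav (u : ℝ → ℝ) (n k : ℕ) : ℝ :=
  davg u (n+1) (2*k) - davg u (n+1) (2*k+1)

lemma lintegral_Ssq (hv : IsWeight v) (f : ℝ → ℝ) :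
    (∫⁻ x in Set.Ico (0:ℝ) 1, Ssq f x * ENNReal.ofReal (v x)) =
      ∑' p : ℕ × ℕ, (if p.2 < 2 ^ p.1 then
        ENNReal.ofReal ((Dav f p.1 p.2) ^ 2) * ENNReal.ofReal (sint v p.1 p.2) else 0) := by
  have hvm : AEMeasurable (fun x => ENNReal.ofReal (v x)) (volume.restrict (Set.Ico (0:ℝ) 1)) :=
    ENNReal.measurable_ofReal.comp_aemeasurable hv.1.aemeasurable
  have key : ∀ x, Ssq f x * ENNReal.ofReal (v x) =
      ∑' p : ℕ × ℕ, ((if p.2 < 2 ^ p.1 ∧ x ∈ dyad p.1 p.2 then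
        ENNReal.ofReal ((Dav f p.1 p.2) ^ 2) else 0) * ENNReal.ofReal (v x)) := by
    intro x
    rw [Ssq, ENNReal.tsum_mul_right]
    rfl
  calc (∫⁻ x in Set.Ico (0:ℝ) 1, Ssq f x * ENNReal.ofReal (v x))
      = ∫⁻ x in Set.Ico (0:ℝ) 1, ∑' p : ℕ × ℕ,
          ((if p.2 < 2 ^ p.1 ∧ x ∈ dyad p.1 p.2 then
            ENNReal.ofReal ((Dav f p.1 p.2) ^ 2) else 0) * ENNReal.ofReal (v x)) := by
        apply lintegral_congr
        exact key
    _ = ∑' p : ℕ × ℕ, ∫⁻ x in Set.Ico (0:ℝ) 1,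
          ((if p.2 < 2 ^ p.1 ∧ x ∈ dyad p.1 p.2 then
            ENNReal.ofReal ((Dav f p.1 p.2) ^ 2) else 0) * ENNReal.ofReal (v x)) := by
        apply lintegral_tsum
        intro p
        by_cases hval : p.2 < 2 ^ p.1
        · have : (fun x => (if p.2 < 2 ^ p.1 ∧ x ∈ dyad p.1 p.2 then
              ENNReal.ofReal ((Dav f p.1 p.2) ^ 2) else 0) * ENNReal.ofReal (v x))
              = fun x => ((dyad p.1 p.2).indicator
                  (fun _ => ENNReal.ofReal ((Dav f p.1 p.2) ^ 2)) x) * ENNReal.ofReal (v x) := by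
            funext x
            by_cases hx : x ∈ dyad p.1 p.2 <;> simp [hval, hx, Set.indicator]
          rw [this]
          exact (((measurable_const.indicator (measurableSet_dyad p.1 p.2)).aemeasurable)).mul hvm
        · have : (fun x => (if p.2 < 2 ^ p.1 ∧ x ∈ dyad p.1 p.2 then
              ENNReal.ofReal ((Dav f p.1 p.2) ^ 2) else 0) * ENNReal.ofReal (v x))
              = fun _ => (0:ℝ≥0∞) := by
            funext x; simp [hval]
          rw [this]
          exact aemeasurable_const
    _ = ∑' p : ℕ × ℕ, (if p.2 < 2 ^ p.1 then
          ENNReal.ofReal ((Dav f p.1 p.2) ^ 2) * ENNReal.ofReal (sint v p.1 p.2) else 0) := by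
        apply tsum_congr
        intro p
        by_cases hval : p.2 < 2 ^ p.1
        · rw [if_pos hval]
          have heq : (fun x => (if p.2 < 2 ^ p.1 ∧ x ∈ dyad p.1 p.2 then
              ENNReal.ofReal ((Dav f p.1 p.2) ^ 2) else 0) * ENNReal.ofReal (v x))
              = fun x => (dyad p.1 p.2).indicator
                  (fun y => ENNReal.ofReal ((Dav f p.1 p.2) ^ 2) * ENNReal.ofReal (v y)) x := by
            funext x
            by_cases hx : x ∈ dyad p.1 p.2 <;> simp [hval, hx, Set.indicator]
          rw [heq, lintegral_indicator (measurableSet_dyad p.1 p.2),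
            Measure.restrict_restrict (measurableSet_dyad p.1 p.2),
            Set.inter_eq_left.mpr (dyad_subset hval),
            lintegral_const_mul' _ _ ENNReal.ofReal_ne_top,
            ← ofReal_integral_eq_lintegral_ofReal (integrableOn_dyad hv.1 hval)
              (ae_nonneg_dyad hv hval)]
          rfl
        · rw [if_neg hval]
          have heq : (fun x => (if p.2 < 2 ^ p.1 ∧ x ∈ dyad p.1 p.2 then
              ENNReal.ofReal ((Dav f p.1 p.2) ^ 2) else 0) * ENNReal.ofReal (v x))
              = fun _ => (0:ℝ≥0∞) := by
            funext x; simp [hval]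
          rw [heq]
          simp

lemma tsum_le_of_finsum {g : ℕ × ℕ → ℝ≥0∞} {c : ℝ≥0∞}
    (h : ∀ s : Finset (ℕ × ℕ), ∑ p ∈ s, g p ≤ c) : ∑' p, g p ≤ c := by
  rw [ENNReal.tsum_eq_iSup_sum]
  exact iSup_le h

end Aux91

namespace Aux91

variable {f v w : ℝ → ℝ}

lemma valid_of_subset {n k m j : ℕ} (hj : j < 2^m) (hsub : dyad n k ⊆ dyad m j) :
    k < 2^n := by
  have hmem : (k:ℝ)/2^n ∈ dyad n k := by
    refine ⟨le_refl _, ?_⟩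
    apply div_lt_div_of_pos_right (by linarith) (by positivity)
  have := (dyad_subset hj) (hsub hmem)
  have h1 : (k:ℝ)/2^n < 1 := this.2
  have h2 : (k:ℝ) < 2^n := by
    rw [div_lt_one (by positivity)] at h1
    exact h1
  exact_mod_cast h2

lemma davg_add_halves {u : ℝ → ℝ} (hu : IntegrableOn u (Set.Ico (0:ℝ) 1)) {n k : ℕ}
    (h : k < 2^n) :
    davg u (n+1) (2*k) + davg u (n+1) (2*k+1) = 2 * davg u n k := by
  rw [davg_eq, davg_eq, davg_eq, ← mul_add, ← sint_split hu h, pow_succ]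
  ring

lemma sint_congr_g {g : ℝ → ℝ} (hg : w =ᵐ[volume.restrict (Set.Ico (0:ℝ) 1)] g)
    {n k : ℕ} (hk : k < 2^n) :
    ∫ x in dyad n k, g x = sint w n k :=
  (integral_congr_ae (ae_restrict_of_ae_restrict_of_subset (dyad_subset hk) hg)).symm

lemma sint_indicator_eq {g : ℝ → ℝ}
    (hg : w =ᵐ[volume.restrict (Set.Ico (0:ℝ) 1)] g) {m j : ℕ}
    {n k : ℕ} (hk : k < 2^n) (hsub : dyad n k ⊆ dyad m j) :
    ∫ x in dyad n k, (dyad m j).indicator g x = sint w n k := by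
  rw [setIntegral_indicator (measurableSet_dyad m j),
    Set.inter_eq_self_of_subset_left hsub]
  exact sint_congr_g hg hk

lemma easy_carleson (hv : IsWeight v) (hw : IsWeight w) {C : ℝ} (hC0 : 0 ≤ C)
    (hbd : ∀ f : ℝ → ℝ, Measurable f →
      IntegrableOn (fun x => (f x) ^ 2 / w x) (Set.Ico (0 : ℝ) 1) →
      (∫⁻ x in Set.Ico (0 : ℝ) 1, Ssq f x * ENNReal.ofReal (v x)) ≤
        ENNReal.ofReal (C * ∫ x in Set.Ico (0 : ℝ) 1, (f x) ^ 2 / w x))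
    {m j : ℕ} (hj : j < 2 ^ m) :
    (∑' p : ℕ × ℕ,
        if dyad p.1 p.2 ⊆ dyad m j then
          ENNReal.ofReal ((Dav w p.1 p.2) ^ 2 * davg v p.1 p.2 * dlen p.1)
        else 0) ≤ ENNReal.ofReal (C * davg w m j * dlen m) := by
  classical
  set g : ℝ → ℝ := hw.1.aestronglyMeasurable.mk w with hgdef
  have hg : w =ᵐ[volume.restrict (Set.Ico (0:ℝ) 1)] g := hw.1.aestronglyMeasurable.ae_eq_mk
  have hgm : Measurable g := hw.1.aestronglyMeasurable.stronglyMeasurable_mk.measurable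
  set f₂ : ℝ → ℝ := (dyad m j).indicator g with hf2def
  have hf2m : Measurable f₂ := hgm.indicator (measurableSet_dyad m j)
  have hind : IntegrableOn ((dyad m j).indicator w) (Set.Ico (0:ℝ) 1) :=
    ((integrableOn_dyad hw.1 hj).integrable_indicator (measurableSet_dyad m j)).integrableOn
  have haeq : (fun x => (f₂ x) ^ 2 / w x) =ᵐ[volume.restrict (Set.Ico (0:ℝ) 1)]
      (dyad m j).indicator w := by
    filter_upwards [hw.2, hg] with x hx hx2
    by_cases hxm : x ∈ dyad m j
    · simp only [hf2def, Set.indicator_of_mem hxm, ← hx2]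
      rw [sq, mul_div_assoc, div_self (ne_of_gt hx), mul_one]
    · simp [hf2def, Set.indicator_of_notMem hxm, ne_of_gt hx]
  have hfi : IntegrableOn (fun x => (f₂ x) ^ 2 / w x) (Set.Ico (0:ℝ) 1) :=
    hind.congr haeq.symm
  have hint : ∫ x in Set.Ico (0:ℝ) 1, (f₂ x) ^ 2 / w x = sint w m j := by
    rw [integral_congr_ae haeq, setIntegral_indicator (measurableSet_dyad m j),
      Set.inter_eq_self_of_subset_right (dyad_subset hj)]
    rfl
  have hDav : ∀ n k : ℕ, k < 2^n → dyad n k ⊆ dyad m j → Dav f₂ n k = Dav w n k := by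
    intro n k hk hsub
    have hL : davg f₂ (n+1) (2*k) = davg w (n+1) (2*k) := by
      rw [davg_eq, davg_eq]
      congr 1
      exact sint_indicator_eq hg (valid_left hk) ((dyad_half_left n k).trans hsub)
    have hR : davg f₂ (n+1) (2*k+1) = davg w (n+1) (2*k+1) := by
      rw [davg_eq, davg_eq]
      congr 1
      exact sint_indicator_eq hg (valid_right hk) ((dyad_half_right n k).trans hsub)
    rw [Dav, Dav, hL, hR]
  have hmain := hbd f₂ hf2m hfi
  rw [hint, lintegral_Ssq hv f₂] at hmain
  apply tsum_le_of_finsum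
  intro s
  calc ∑ p ∈ s, (if dyad p.1 p.2 ⊆ dyad m j then
        ENNReal.ofReal ((Dav w p.1 p.2) ^ 2 * davg v p.1 p.2 * dlen p.1) else 0)
      ≤ ∑ p ∈ s, (if p.2 < 2 ^ p.1 then
          ENNReal.ofReal ((Dav f₂ p.1 p.2) ^ 2) * ENNReal.ofReal (sint v p.1 p.2) else 0) := by
        apply Finset.sum_le_sum
        intro p _
        by_cases hsub : dyad p.1 p.2 ⊆ dyad m j
        · have hval : p.2 < 2 ^ p.1 := valid_of_subset hj hsub
          have h1 : Dav f₂ p.1 p.2 = Dav w p.1 p.2 := hDav p.1 p.2 hval hsub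
          rw [if_pos hsub, if_pos hval, h1, mul_assoc, ENNReal.ofReal_mul (sq_nonneg _),
            davg_dlen]
        · rw [if_neg hsub]
          exact zero_le
    _ ≤ ∑' p : ℕ × ℕ, (if p.2 < 2 ^ p.1 then
          ENNReal.ofReal ((Dav f₂ p.1 p.2) ^ 2) * ENNReal.ofReal (sint v p.1 p.2) else 0) :=
        ENNReal.sum_le_tsum s
    _ ≤ ENNReal.ofReal (C * sint w m j) := hmain
    _ = ENNReal.ofReal (C * davg w m j * dlen m) := by rw [mul_assoc, davg_dlen]

lemma easy_A2 (hv : IsWeight v) (hw : IsWeight w) {C : ℝ} (hC0 : 0 ≤ C)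
    (hbd : ∀ f : ℝ → ℝ, Measurable f →
      IntegrableOn (fun x => (f x) ^ 2 / w x) (Set.Ico (0 : ℝ) 1) →
      (∫⁻ x in Set.Ico (0 : ℝ) 1, Ssq f x * ENNReal.ofReal (v x)) ≤
        ENNReal.ofReal (C * ∫ x in Set.Ico (0 : ℝ) 1, (f x) ^ 2 / w x))
    {n k : ℕ} (hk : k < 2 ^ n) :
    davg v n k * davg w n k ≤ C := by
  classical
  set g : ℝ → ℝ := hw.1.aestronglyMeasurable.mk w with hgdef
  have hg : w =ᵐ[volume.restrict (Set.Ico (0:ℝ) 1)] g := hw.1.aestronglyMeasurable.ae_eq_mk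
  have hgm : Measurable g := hw.1.aestronglyMeasurable.stronglyMeasurable_mk.measurable
  set L : Set ℝ := dyad (n+1) (2*k) with hLdef
  set R : Set ℝ := dyad (n+1) (2*k+1) with hRdef
  set f₁ : ℝ → ℝ := fun x => L.indicator g x - R.indicator g x with hf1def
  have hf1m : Measurable f₁ :=
    (hgm.indicator (measurableSet_dyad _ _)).sub (hgm.indicator (measurableSet_dyad _ _))
  have hdisj : Disjoint L R := dyad_disj n k
  have hind : IntegrableOn ((dyad n k).indicator w) (Set.Ico (0:ℝ) 1) :=
    ((integrableOn_dyad hw.1 hk).integrable_indicator (measurableSet_dyad n k)).integrableOn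
  have haeq : (fun x => (f₁ x) ^ 2 / w x) =ᵐ[volume.restrict (Set.Ico (0:ℝ) 1)]
      (dyad n k).indicator w := by
    filter_upwards [hw.2, hg] with x hx hx2
    by_cases hxL : x ∈ L
    · have hxR : x ∉ R := fun hxR => (Set.disjoint_left.mp hdisj hxL) hxR
      have hxI : x ∈ dyad n k := dyad_half_left n k hxL
      simp only [hf1def, Set.indicator_of_mem hxL, Set.indicator_of_notMem hxR, sub_zero,
        Set.indicator_of_mem hxI, ← hx2]
      rw [sq, mul_div_assoc, div_self (ne_of_gt hx), mul_one]
    · by_cases hxR : x ∈ R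
      · have hxI : x ∈ dyad n k := dyad_half_right n k hxR
        simp only [hf1def, Set.indicator_of_notMem hxL, Set.indicator_of_mem hxR, zero_sub,
          Set.indicator_of_mem hxI, ← hx2]
        rw [neg_sq, sq, mul_div_assoc, div_self (ne_of_gt hx), mul_one]
      · have hxI : x ∉ dyad n k := by
          rw [dyad_split n k]
          intro hmem
          rcases hmem with h | h
          · exact hxL h
          · exact hxR h
        simp [hf1def, Set.indicator_of_notMem hxL, Set.indicator_of_notMem hxR,
          Set.indicator_of_notMem hxI]
  have hfi : IntegrableOn (fun x => (f₁ x) ^ 2 / w x) (Set.Ico (0:ℝ) 1) :=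
    hind.congr haeq.symm
  have hint : ∫ x in Set.Ico (0:ℝ) 1, (f₁ x) ^ 2 / w x = sint w n k := by
    rw [integral_congr_ae haeq, setIntegral_indicator (measurableSet_dyad n k),
      Set.inter_eq_self_of_subset_right (dyad_subset hk)]
    rfl
  have hf1L : sint f₁ (n+1) (2*k) = sint w (n+1) (2*k) := by
    unfold sint
    rw [setIntegral_congr_fun (measurableSet_dyad _ _) (g := g)
      (fun x hx => by
        have hxR : x ∉ R := fun hxR => (Set.disjoint_left.mp hdisj hx) hxR
        simp [hf1def, Set.indicator_of_mem hx, Set.indicator_of_notMem hxR, show x ∈ L from hx])]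
    exact sint_congr_g hg (valid_left hk)
  have hf1R : sint f₁ (n+1) (2*k+1) = -sint w (n+1) (2*k+1) := by
    unfold sint
    rw [setIntegral_congr_fun (measurableSet_dyad _ _) (g := fun x => -g x)
      (fun x hx => by
        have hxL : x ∉ L := fun hxL => (Set.disjoint_left.mp hdisj hxL) hx
        simp [hf1def, Set.indicator_of_mem hx, Set.indicator_of_notMem hxL, show x ∈ R from hx])]
    rw [integral_neg]
    congr 1
    exact sint_congr_g hg (valid_right hk)
  have hDav1 : Dav f₁ n k = 2 * davg w n k := by
    rw [Dav, davg_eq, davg_eq, hf1L, hf1R, ← davg_add_halves hw.1 hk, davg_eq, davg_eq]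
    ring
  have hmain := hbd f₁ hf1m hfi
  rw [hint, lintegral_Ssq hv f₁] at hmain
  have hterm := ENNReal.le_tsum (f := fun p : ℕ × ℕ => (if p.2 < 2 ^ p.1 then
    ENNReal.ofReal ((Dav f₁ p.1 p.2) ^ 2) * ENNReal.ofReal (sint v p.1 p.2) else 0)) (n, k)
  rw [if_pos hk, hDav1] at hterm
  have hcomb : ENNReal.ofReal ((2 * davg w n k)^2 * sint v n k)
      ≤ ENNReal.ofReal (C * sint w n k) := by
    rw [ENNReal.ofReal_mul (sq_nonneg _)]
    exact le_trans hterm hmain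
  have hrnn : 0 ≤ C * sint w n k := mul_nonneg hC0 (sint_nonneg hw hk)
  have hreal : (2 * davg w n k)^2 * sint v n k ≤ C * sint w n k :=
    (ENNReal.ofReal_le_ofReal_iff hrnn).mp hcomb
  have hdw : 0 < davg w n k := davg_pos hw hk
  have hdl : 0 < dlen n := dlen_pos n
  rw [← davg_dlen, ← davg_dlen] at hreal
  have h4 : 4 * (davg v n k * davg w n k) ≤ C := by
    have hpos : 0 < davg w n k * dlen n := mul_pos hdw hdl
    apply le_of_mul_le_mul_right _ hpos
    calc 4 * (davg v n k * davg w n k) * (davg w n k * dlen n)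
        = (2 * davg w n k)^2 * (davg v n k * dlen n) := by ring
      _ ≤ C * (davg w n k * dlen n) := hreal
  linarith

end Aux91

namespace Aux91

variable {f v w : ℝ → ℝ}

/-- w-average of f -/
def Ef (f w : ℝ → ℝ) (n k : ℕ) : ℝ := sint f n k / sint w n k

/-- Carleson measure coefficients -/
def muW (v w : ℝ → ℝ) (n k : ℕ) : ℝ := (Dav w n k)^2 * sint v n k

/-- squared-norm coefficients -/
def Fq (f w : ℝ → ℝ) (n k : ℕ) : ℝ := sint (fun x => f x ^ 2 / w x) n k

/-- Bessel terms -/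
def bess (f w : ℝ → ℝ) (n k : ℕ) : ℝ :=
  sint w (n+1) (2*k) * (Ef f w (n+1) (2*k) - Ef f w n k)^2 +
    sint w (n+1) (2*k+1) * (Ef f w (n+1) (2*k+1) - Ef f w n k)^2

section RealCore

variable (hv : IsWeight v) (hw : IsWeight w) (hf : Measurable f)
  (hfi : IntegrableOn (fun x => f x ^ 2 / w x) (Set.Ico (0:ℝ) 1))

include hv hw hf hfi

omit hv hf hfi in
/-- purely algebraic identity for the Bessel term -/
lemma bess_eq {n k : ℕ} (hk : k < 2^n)
    (hfint : IntegrableOn f (Set.Ico (0:ℝ) 1)) :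
    bess f w n k = (sint f (n+1) (2*k))^2 / sint w (n+1) (2*k)
      + (sint f (n+1) (2*k+1))^2 / sint w (n+1) (2*k+1)
      - (sint f n k)^2 / sint w n k := by
  have hmL : 0 < sint w (n+1) (2*k) := sint_pos hw (valid_left hk)
  have hmR : 0 < sint w (n+1) (2*k+1) := sint_pos hw (valid_right hk)
  have hm : sint w n k = sint w (n+1) (2*k) + sint w (n+1) (2*k+1) := sint_split hw.1 hk
  have hφ : sint f n k = sint f (n+1) (2*k) + sint f (n+1) (2*k+1) := sint_split hfint hk
  rw [bess, Ef, Ef, Ef, hm, hφ]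
  have hm0 : sint w (n+1) (2*k) + sint w (n+1) (2*k+1) ≠ 0 := by positivity
  field_simp
  ring

omit hv in
lemma bessel_bound (d : ℕ) : ∀ n k : ℕ, k < 2^n →
    Sdesc (bess f w) d n k ≤ Fq f w n k - (sint f n k)^2 / sint w n k := by
  have hfint : IntegrableOn f (Set.Ico (0:ℝ) 1) := integrableOn_f hw hf hfi
  induction d with
  | zero =>
    intro n k hk
    rw [show Sdesc (bess f w) 0 n k = bess f w n k from rfl, bess_eq hw hk hfint]
    have hL := sint_sq_le hw hf hfi (valid_left hk)
    have hR := sint_sq_le hw hf hfi (valid_right hk)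
    have hmL : 0 < sint w (n+1) (2*k) := sint_pos hw (valid_left hk)
    have hmR : 0 < sint w (n+1) (2*k+1) := sint_pos hw (valid_right hk)
    have hFsplit : Fq f w n k = Fq f w (n+1) (2*k) + Fq f w (n+1) (2*k+1) :=
      sint_split hfi hk
    have h1 : (sint f (n+1) (2*k))^2 / sint w (n+1) (2*k) ≤ Fq f w (n+1) (2*k) := by
      rw [div_le_iff₀ hmL]; exact hL
    have h2 : (sint f (n+1) (2*k+1))^2 / sint w (n+1) (2*k+1) ≤ Fq f w (n+1) (2*k+1) := by
      rw [div_le_iff₀ hmR]; exact hR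
    linarith
  | succ d ih =>
    intro n k hk
    rw [show Sdesc (bess f w) (d+1) n k
      = bess f w n k + Sdesc (bess f w) d (n+1) (2*k) + Sdesc (bess f w) d (n+1) (2*k+1)
      from rfl, bess_eq hw hk hfint]
    have hL := ih (n+1) (2*k) (valid_left hk)
    have hR := ih (n+1) (2*k+1) (valid_right hk)
    have hFsplit : Fq f w n k = Fq f w (n+1) (2*k) + Fq f w (n+1) (2*k+1) :=
      sint_split hfi hk
    linarith

end RealCore

/-- key inequality for the Carleson embedding step -/
lemma cet_key0 {φ m s u : ℝ} (hm : 0 < m) (hu : 0 ≤ u)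
    (hs1 : 0 < s - u) (hs2 : s ≤ 2*m) :
    u*(φ/m)^2 ≤ 4*(φ^2/(s-u) - φ^2/s) := by
  have hs0 : 0 < s := by linarith
  rw [div_sub_div _ _ (ne_of_gt hs1) (ne_of_gt hs0),
    show φ^2*s - (s-u)*φ^2 = φ^2*u from by ring, div_pow,
    show u * (φ^2/m^2) = u*φ^2/m^2 from (mul_div_assoc u _ _).symm,
    show (4:ℝ) * (φ^2*u/((s-u)*s)) = 4*(φ^2*u)/((s-u)*s) from (mul_div_assoc 4 _ _).symm,
    div_le_div_iff₀ (by positivity) (by positivity)]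
  have h4 : (s-u)*s ≤ 4*m^2 := by nlinarith
  nlinarith [mul_le_mul_of_nonneg_left h4 (mul_nonneg hu (sq_nonneg φ))]

lemma muW_nonneg (hv : IsWeight v) {n k : ℕ} (hk : k < 2^n) : 0 ≤ muW v w n k :=
  mul_nonneg (sq_nonneg _) (sint_nonneg hv hk)

section CET

variable {A : ℝ}
variable (hv : IsWeight v) (hw : IsWeight w) (hf : Measurable f)
  (hfi : IntegrableOn (fun x => f x ^ 2 / w x) (Set.Ico (0:ℝ) 1))
  (hA : 0 < A)
  (hCar : ∀ n k : ℕ, k < 2^n → ∀ d : ℕ, Sdesc (muW v w) d n k ≤ A * sint w n k)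

include hv hw hf hfi hA hCar

set_option maxHeartbeats 1000000 in
lemma cet_bound (d : ℕ) : ∀ n k : ℕ, k < 2^n →
    Sdesc (fun n k => muW v w n k * (Ef f w n k)^2) d n k
      ≤ 4*A*(Fq f w n k - (sint f n k)^2/(sint w n k + Sdesc (muW v w) d n k / A)) := by
  induction d with
  | zero =>
    intro n k hk
    have hm : 0 < sint w n k := sint_pos hw hk
    have hμ : 0 ≤ muW v w n k := muW_nonneg hv hk
    have hcar := hCar n k hk 0
    rw [show Sdesc (muW v w) 0 n k = muW v w n k from rfl] at *
    rw [show Sdesc (fun n k => muW v w n k * (Ef f w n k)^2) 0 n k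
      = muW v w n k * (Ef f w n k)^2 from rfl]
    have hcs := sint_sq_le hw hf hfi hk
    have huA : 0 ≤ muW v w n k / A := div_nonneg hμ hA.le
    have huAm : muW v w n k / A ≤ sint w n k := by
      rw [div_le_iff₀ hA]; linarith [hcar]
    have hkey := cet_key0 (φ := sint f n k) (m := sint w n k)
      (s := sint w n k + muW v w n k / A) (u := muW v w n k / A)
      hm huA (by linarith) (by linarith)
    have hkey2 := mul_le_mul_of_nonneg_left hkey hA.le
    have hmu_eq : A * (muW v w n k / A) = muW v w n k := by
      field_simp
    have hE : Ef f w n k = sint f n k / sint w n k := rfl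
    have hFlow : (sint f n k)^2 / sint w n k ≤ Fq f w n k := by
      rw [div_le_iff₀ hm]; exact hcs
    have hs1' : sint w n k + muW v w n k / A - muW v w n k / A = sint w n k := by ring
    rw [hs1'] at hkey2
    calc muW v w n k * (Ef f w n k)^2
        = A * (muW v w n k / A * (sint f n k / sint w n k)^2) := by
          rw [hE, ← mul_assoc, hmu_eq]
      _ ≤ A * (4*((sint f n k)^2/sint w n k - (sint f n k)^2/(sint w n k + muW v w n k / A))) :=
          hkey2
      _ ≤ 4*A*(Fq f w n k - (sint f n k)^2/(sint w n k + muW v w n k / A)) := by nlinarith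
  | succ d ih =>
    intro n k hk
    have hm : 0 < sint w n k := sint_pos hw hk
    have hmL : 0 < sint w (n+1) (2*k) := sint_pos hw (valid_left hk)
    have hmR : 0 < sint w (n+1) (2*k+1) := sint_pos hw (valid_right hk)
    have hμ : 0 ≤ muW v w n k := muW_nonneg hv hk
    have hνL : 0 ≤ Sdesc (muW v w) d (n+1) (2*k) :=
      Sdesc_nonneg (fun n k hk => muW_nonneg hv hk) (valid_left hk)
    have hνR : 0 ≤ Sdesc (muW v w) d (n+1) (2*k+1) :=
      Sdesc_nonneg (fun n k hk => muW_nonneg hv hk) (valid_right hk)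
    have hcar := hCar n k hk (d+1)
    have hL := ih (n+1) (2*k) (valid_left hk)
    have hR := ih (n+1) (2*k+1) (valid_right hk)
    set m := sint w n k
    set mL := sint w (n+1) (2*k)
    set mR := sint w (n+1) (2*k+1)
    set φ := sint f n k
    set φL := sint f (n+1) (2*k)
    set φR := sint f (n+1) (2*k+1)
    set μ := muW v w n k
    set νL := Sdesc (muW v w) d (n+1) (2*k)
    set νR := Sdesc (muW v w) d (n+1) (2*k+1)
    have hν_eq : Sdesc (muW v w) (d+1) n k = μ + νL + νR := by
      rw [show Sdesc (muW v w) (d+1) n k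
        = muW v w n k + Sdesc (muW v w) d (n+1) (2*k) + Sdesc (muW v w) d (n+1) (2*k+1)
        from rfl]
    have hm_split : m = mL + mR := sint_split hw.1 hk
    have hφ_split : φ = φL + φR := sint_split (integrableOn_f hw hf hfi) hk
    have hF_split : Fq f w n k = Fq f w (n+1) (2*k) + Fq f w (n+1) (2*k+1) :=
      sint_split hfi hk
    set sL := mL + νL/A
    set sR := mR + νR/A
    have hsL : 0 < sL := by have : 0 ≤ νL/A := div_nonneg hνL hA.le; simp only [sL]; linarith
    have hsR : 0 < sR := by have : 0 ≤ νR/A := div_nonneg hνR hA.le; simp only [sR]; linarith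
    have hconv : φ^2/(sL+sR) ≤ φL^2/sL + φR^2/sR := by
      rw [hφ_split]
      exact sq_div_add φL φR sL sR hsL hsR
    -- set s := m + ν/A where ν = μ + νL + νR
    have hcar' : (μ + νL + νR) / A ≤ m := by
      rw [div_le_iff₀ hA]
      rw [hν_eq] at hcar
      linarith
    have hμA : 0 ≤ μ/A := div_nonneg hμ hA.le
    have hkey := cet_key0 (φ := φ) (m := m)
      (s := m + (μ + νL + νR)/A) (u := μ/A) hm hμA
      (by
        have e : m + (μ + νL + νR)/A - μ/A = m + (νL/A + νR/A) := by ring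
        rw [e]
        have : 0 ≤ νL/A + νR/A := by positivity
        linarith)
      (by linarith)
    have hkey2 := mul_le_mul_of_nonneg_left hkey hA.le
    have hmu_eq : A * (μ/A) = μ := by field_simp
    have hsum_eq : m + (μ + νL + νR)/A - μ/A = sL + sR := by
      simp only [sL, sR]
      rw [hm_split]
      ring
    rw [hsum_eq] at hkey2
    have hE : Ef f w n k = φ / m := rfl
    have hEL : Ef f w (n+1) (2*k) = φL / mL := rfl
    have hER : Ef f w (n+1) (2*k+1) = φR / mR := rfl
    have hgoal_eq : Sdesc (fun n k => muW v w n k * (Ef f w n k)^2) (d+1) n k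
        = muW v w n k * (Ef f w n k)^2
          + Sdesc (fun n k => muW v w n k * (Ef f w n k)^2) d (n+1) (2*k)
          + Sdesc (fun n k => muW v w n k * (Ef f w n k)^2) d (n+1) (2*k+1) := rfl
    rw [hgoal_eq, hν_eq]
    have hμE : μ * (Ef f w n k)^2 ≤ 4*A*(φ^2/(sL+sR) - φ^2/(m + (μ + νL + νR)/A)) := by
      calc μ * (Ef f w n k)^2 = A * (μ/A * (φ/m)^2) := by rw [hE, ← mul_assoc, hmu_eq]
        _ ≤ A * (4*(φ^2/(sL+sR) - φ^2/(m + (μ + νL + νR)/A))) := hkey2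
        _ = 4*A*(φ^2/(sL+sR) - φ^2/(m + (μ + νL + νR)/A)) := by ring
    have h4conv : 4*A*(φ^2/(sL+sR)) ≤ 4*A*(φL^2/sL + φR^2/sR) := by
      have h4A : (0:ℝ) ≤ 4*A := by linarith
      nlinarith [hconv]
    calc muW v w n k * (Ef f w n k)^2
          + Sdesc (fun n k => muW v w n k * (Ef f w n k)^2) d (n+1) (2*k)
          + Sdesc (fun n k => muW v w n k * (Ef f w n k)^2) d (n+1) (2*k+1)
        ≤ 4*A*(φ^2/(sL+sR) - φ^2/(m + (μ + νL + νR)/A))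
          + 4*A*(Fq f w (n+1) (2*k) - φL^2/sL)
          + 4*A*(Fq f w (n+1) (2*k+1) - φR^2/sR) := by
          refine add_le_add (add_le_add hμE ?_) ?_
          · exact hL
          · exact hR
      _ ≤ 4*A*(Fq f w n k - φ^2/(m + (μ + νL + νR)/A)) := by
          rw [hF_split]
          linarith [h4conv]

lemma cet_final (d : ℕ) {n k : ℕ} (hk : k < 2^n) :
    Sdesc (fun n k => muW v w n k * (Ef f w n k)^2) d n k ≤ 4*A*Fq f w n k := by
  have h := cet_bound hv hw hf hfi hA hCar d n k hk
  have hm : 0 < sint w n k := sint_pos hw hk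
  have hν : 0 ≤ Sdesc (muW v w) d n k :=
    Sdesc_nonneg (fun n k hk => muW_nonneg hv hk) hk
  have hpos : 0 < sint w n k + Sdesc (muW v w) d n k / A := by
    have : 0 ≤ Sdesc (muW v w) d n k / A := div_nonneg hν hA.le
    linarith
  have : 0 ≤ (sint f n k)^2/(sint w n k + Sdesc (muW v w) d n k / A) := by positivity
  nlinarith [hA]

end CET

end Aux91

namespace Aux91

variable {f v w : ℝ → ℝ}

lemma Sdesc_smul (c : ℝ) (g : ℕ → ℕ → ℝ) (d n k : ℕ) :
    Sdesc (fun n k => c * g n k) d n k = c * Sdesc g d n k := by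
  simp [Sdesc_eq_sum, Finset.mul_sum]

section Hard

variable {A : ℝ}
variable (hv : IsWeight v) (hw : IsWeight w) (hf : Measurable f)
  (hfi : IntegrableOn (fun x => f x ^ 2 / w x) (Set.Ico (0:ℝ) 1))
  (hA : 0 < A)
  (hA2 : ∀ n k : ℕ, k < 2^n → davg v n k * davg w n k ≤ A)
  (hCar : ∀ n k : ℕ, k < 2^n → ∀ d : ℕ, Sdesc (muW v w) d n k ≤ A * sint w n k)

include hv hw hf hfi hA hA2

omit hA in
set_option maxHeartbeats 1000000 in
lemma split_bound {n k : ℕ} (hk : k < 2^n) :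
    (Dav f n k)^2 * sint v n k
      ≤ 3*(muW v w n k * (Ef f w n k)^2) + 12*A*(bess f w n k) := by
  have hm : 0 < sint w n k := sint_pos hw hk
  have hmL : 0 < sint w (n+1) (2*k) := sint_pos hw (valid_left hk)
  have hmR : 0 < sint w (n+1) (2*k+1) := sint_pos hw (valid_right hk)
  have hσ : 0 ≤ sint v n k := sint_nonneg hv hk
  set m := sint w n k with hm_def
  set mL := sint w (n+1) (2*k)
  set mR := sint w (n+1) (2*k+1)
  set φL := sint f (n+1) (2*k)
  set φR := sint f (n+1) (2*k+1)
  set σ := sint v n k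
  set E := Ef f w n k
  set EL := Ef f w (n+1) (2*k)
  set ER := Ef f w (n+1) (2*k+1)
  have hm_split : m = mL + mR := sint_split hw.1 hk
  have hELm : mL * EL = φL := by
    simp only [EL, Ef]
    field_simp
    exact mul_div_cancel_left₀ _ hmL.ne'
  have hERm : mR * ER = φR := by
    simp only [ER, Ef]
    field_simp
    exact mul_div_cancel_left₀ _ hmR.ne'
  have hDf : Dav f n k = 2^(n+1) * (φL - φR) := by
    rw [Dav, davg_eq, davg_eq]; ring
  have hDw : Dav w n k = 2^(n+1) * (mL - mR) := by
    rw [Dav, davg_eq, davg_eq]; ring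
  have hiden : Dav f n k = E * Dav w n k
      + (2^(n+1) * mL * (EL - E) - 2^(n+1) * mR * (ER - E)) := by
    rw [hDf, hDw]
    have : φL - φR = E*(mL - mR) + (mL*(EL - E) - mR*(ER - E)) := by
      linear_combination hERm - hELm
    rw [this]; ring
  -- A2 bound : 4^n * σ * m ≤ A
  have hA2' : (4:ℝ)^n * (σ * m) ≤ A := by
    have := hA2 n k hk
    rw [davg_eq, davg_eq] at this
    calc (4:ℝ)^n * (σ * m) = (2^n * σ) * (2^n * m) := by
          rw [show (4:ℝ) = 2*2 from by norm_num, mul_pow]; ring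
      _ ≤ A := this
  have hsqL : (4:ℝ)^(n+1) * mL^2 * σ ≤ 4*A*mL := by
    have h1 : (4:ℝ)^(n+1) * mL^2 * σ ≤ 4 * mL * ((4:ℝ)^n * (σ * m)) := by
      have hmLm : mL ≤ m := by rw [hm_split]; linarith
      have h4n : (0:ℝ) < 4^n := by positivity
      rw [pow_succ]
      nlinarith [mul_nonneg (mul_nonneg h4n.le hσ) hmL.le]
    calc (4:ℝ)^(n+1) * mL^2 * σ ≤ 4 * mL * ((4:ℝ)^n * (σ * m)) := h1
      _ ≤ 4*A*mL := by nlinarith [hA2', hmL]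
  have hsqR : (4:ℝ)^(n+1) * mR^2 * σ ≤ 4*A*mR := by
    have h1 : (4:ℝ)^(n+1) * mR^2 * σ ≤ 4 * mR * ((4:ℝ)^n * (σ * m)) := by
      have hmRm : mR ≤ m := by rw [hm_split]; linarith
      have h4n : (0:ℝ) < 4^n := by positivity
      rw [pow_succ]
      nlinarith [mul_nonneg (mul_nonneg h4n.le hσ) hmR.le]
    calc (4:ℝ)^(n+1) * mR^2 * σ ≤ 4 * mR * ((4:ℝ)^n * (σ * m)) := h1
      _ ≤ 4*A*mR := by nlinarith [hA2', hmR]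
  set a := E * Dav w n k
  set b := (2:ℝ)^(n+1) * mL * (EL - E)
  set c := (2:ℝ)^(n+1) * mR * (ER - E)
  have hsq3 : (Dav f n k)^2 ≤ 3*a^2 + 3*b^2 + 3*c^2 := by
    rw [hiden]
    nlinarith [sq_nonneg (a - b), sq_nonneg (a + c), sq_nonneg (b + c)]
  have hmulσ : (Dav f n k)^2 * σ ≤ 3*a^2*σ + 3*b^2*σ + 3*c^2*σ := by
    nlinarith [hsq3, hσ]
  have hbσ : b^2*σ ≤ 4*A*mL*(EL - E)^2 := by
    have : b^2*σ = ((4:ℝ)^(n+1) * mL^2 * σ) * (EL - E)^2 := by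
      simp only [b]
      rw [show ((4:ℝ))^(n+1) = (2^(n+1))^2 from by
        rw [show (4:ℝ) = 2^2 from by norm_num, ← pow_mul, ← pow_mul, Nat.mul_comm]]
      ring
    rw [this]
    exact mul_le_mul_of_nonneg_right hsqL (sq_nonneg _)
  have hcσ : c^2*σ ≤ 4*A*mR*(ER - E)^2 := by
    have : c^2*σ = ((4:ℝ)^(n+1) * mR^2 * σ) * (ER - E)^2 := by
      simp only [c]
      rw [show ((4:ℝ))^(n+1) = (2^(n+1))^2 from by
        rw [show (4:ℝ) = 2^2 from by norm_num, ← pow_mul, ← pow_mul, Nat.mul_comm]]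
      ring
    rw [this]
    exact mul_le_mul_of_nonneg_right hsqR (sq_nonneg _)
  have haσ : 3*a^2*σ = 3*(muW v w n k * E^2) := by
    simp only [a, muW]
    ring
  have hbess : bess f w n k = mL*(EL - E)^2 + mR*(ER - E)^2 := rfl
  rw [hbess]
  calc (Dav f n k)^2 * σ ≤ 3*a^2*σ + 3*b^2*σ + 3*c^2*σ := hmulσ
    _ ≤ 3*(muW v w n k * E^2) + 3*(4*A*mL*(EL - E)^2) + 3*(4*A*mR*(ER - E)^2) := by
        rw [← haσ]
        linarith [hbσ, hcσ]
    _ = 3*(muW v w n k * E^2) + 12*A*(mL*(EL - E)^2 + mR*(ER - E)^2) := by ring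

include hCar in
set_option maxHeartbeats 1000000 in
lemma hard_core (N : ℕ) :
    Sdesc (fun n k => (Dav f n k)^2 * sint v n k) N 0 0 ≤ 24*A*Fq f w 0 0 := by
  have h00 : (0:ℕ) < 2^0 := by norm_num
  have h1 : Sdesc (fun n k => (Dav f n k)^2 * sint v n k) N 0 0
      ≤ Sdesc (fun n k => 3*(muW v w n k * (Ef f w n k)^2) + 12*A*(bess f w n k)) N 0 0 :=
    Sdesc_mono h00 (fun n' k' hk' => split_bound hv hw hf hfi hA2 hk')
  rw [Sdesc_add, show (fun n k => 3*(muW v w n k * (Ef f w n k)^2))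
      = fun n k => 3*((fun n k => muW v w n k * (Ef f w n k)^2) n k) from rfl, Sdesc_smul,
    show (fun n k => 12*A*(bess f w n k)) = fun n k => (12*A)*((bess f w) n k) from rfl,
    Sdesc_smul] at h1
  have hcet := cet_final hv hw hf hfi hA hCar N (n := 0) (k := 0) h00
  have hbess := bessel_bound hw hf hfi N 0 0 h00
  have hφm : 0 ≤ (sint f 0 0)^2 / sint w 0 0 := by
    have := sint_pos hw h00
    positivity
  have hF0 : 0 ≤ Fq f w 0 0 := setIntegral_nonneg_of_ae_restrict (fsq_nonneg_ae hw h00)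
  have h12A : (0:ℝ) ≤ 12*A := by linarith
  calc Sdesc (fun n k => (Dav f n k)^2 * sint v n k) N 0 0
      ≤ 3 * Sdesc (fun n k => muW v w n k * (Ef f w n k)^2) N 0 0
        + (12*A) * Sdesc (bess f w) N 0 0 := h1
    _ ≤ 3 * (4*A*Fq f w 0 0) + (12*A) * (Fq f w 0 0 - (sint f 0 0)^2 / sint w 0 0) := by
        refine add_le_add ?_ ?_
        · linarith [hcet]
        · exact mul_le_mul_of_nonneg_left hbess h12A
    _ ≤ 24*A*Fq f w 0 0 := by nlinarith [hφm, hA]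

end Hard

end Aux91

namespace Aux91

variable {f v w : ℝ → ℝ}

lemma hCar_real_of_tsum (hv : IsWeight v) (hw : IsWeight w) {A : ℝ} (hA0 : 0 ≤ A)
    (hCar : ∀ m j : ℕ, j < 2 ^ m →
      (∑' p : ℕ × ℕ,
          if dyad p.1 p.2 ⊆ dyad m j then
            ENNReal.ofReal ((Dav w p.1 p.2) ^ 2 * davg v p.1 p.2 * dlen p.1)
          else 0) ≤ ENNReal.ofReal (A * davg w m j * dlen m)) :
    ∀ n k : ℕ, k < 2^n → ∀ d : ℕ, Sdesc (muW v w) d n k ≤ A * sint w n k := by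
  intro n k hk d
  have hofr : ENNReal.ofReal (Sdesc (muW v w) d n k)
      ≤ ENNReal.ofReal (A * davg w n k * dlen n) := by
    rw [Sdesc_eq_sum,
      ENNReal.ofReal_sum_of_nonneg (fun p hp => muW_nonneg hv (mem_DF_valid hk hp))]
    calc ∑ p ∈ DF d n k, ENNReal.ofReal (muW v w p.1 p.2)
        = ∑ p ∈ DF d n k, (if dyad p.1 p.2 ⊆ dyad n k then
            ENNReal.ofReal ((Dav w p.1 p.2) ^ 2 * davg v p.1 p.2 * dlen p.1) else 0) := by
          apply Finset.sum_congr rfl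
          intro p hp
          rw [if_pos (mem_DF_subset hp)]
          congr 1
          simp only [muW]
          rw [← davg_dlen]
          ring
      _ ≤ ∑' p : ℕ × ℕ, (if dyad p.1 p.2 ⊆ dyad n k then
            ENNReal.ofReal ((Dav w p.1 p.2) ^ 2 * davg v p.1 p.2 * dlen p.1) else 0) :=
          ENNReal.sum_le_tsum _
      _ ≤ ENNReal.ofReal (A * davg w n k * dlen n) := hCar n k hk
  rw [mul_assoc, davg_dlen] at hofr
  exact (ENNReal.ofReal_le_ofReal_iff (mul_nonneg hA0 (sint_nonneg hw hk))).mp hofr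

lemma hard_dir (hv : IsWeight v) (hw : IsWeight w) {A : ℝ} (hA0 : 0 ≤ A)
    (hA2 : ∀ n k : ℕ, k < 2 ^ n → davg v n k * davg w n k ≤ A)
    (hCar : ∀ m j : ℕ, j < 2 ^ m →
      (∑' p : ℕ × ℕ,
          if dyad p.1 p.2 ⊆ dyad m j then
            ENNReal.ofReal ((Dav w p.1 p.2) ^ 2 * davg v p.1 p.2 * dlen p.1)
          else 0) ≤ ENNReal.ofReal (A * davg w m j * dlen m)) :
    ∀ f : ℝ → ℝ, Measurable f →
      IntegrableOn (fun x => (f x) ^ 2 / w x) (Set.Ico (0 : ℝ) 1) →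
      (∫⁻ x in Set.Ico (0 : ℝ) 1, Ssq f x * ENNReal.ofReal (v x)) ≤
        ENNReal.ofReal ((24*A) * ∫ x in Set.Ico (0 : ℝ) 1, (f x) ^ 2 / w x) := by
  have h00 : (0:ℕ) < 2^0 := by norm_num
  have hApos : 0 < A :=
    lt_of_lt_of_le (mul_pos (davg_pos hv h00) (davg_pos hw h00)) (hA2 0 0 h00)
  have hCar' := hCar_real_of_tsum hv hw hA0 hCar
  intro f hf hfi
  rw [lintegral_Ssq hv f]
  have hint_eq : (∫ x in Set.Ico (0:ℝ) 1, (f x) ^ 2 / w x) = Fq f w 0 0 := by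
    rw [Fq, sint, dyad_zero]
  rw [hint_eq]
  apply tsum_le_of_finsum
  intro s
  classical
  set N := s.sup (fun p : ℕ × ℕ => p.1) with hN
  set G : ℕ → ℕ → ℝ := fun n k => (Dav f n k)^2 * sint v n k with hG
  set s' := s.filter (fun p : ℕ × ℕ => p.2 < 2^p.1) with hs'
  have hstep1 : ∑ p ∈ s, (if p.2 < 2^p.1 then
        ENNReal.ofReal ((Dav f p.1 p.2) ^ 2) * ENNReal.ofReal (sint v p.1 p.2) else 0)
      = ∑ p ∈ s', ENNReal.ofReal (G p.1 p.2) := by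
    rw [hs', Finset.sum_filter]
    apply Finset.sum_congr rfl
    intro p hp
    by_cases hval : p.2 < 2^p.1
    · rw [if_pos hval, if_pos hval, hG, ← ENNReal.ofReal_mul (sq_nonneg _)]
    · rw [if_neg hval, if_neg hval]
  have hsub : s' ⊆ DF N 0 0 := by
    intro p hp
    rw [hs', Finset.mem_filter] at hp
    exact mem_DF_root N hp.2 (Finset.le_sup (f := fun p : ℕ × ℕ => p.1) hp.1)
  have hsum_le : ∑ p ∈ s', G p.1 p.2 ≤ Sdesc G N 0 0 := by
    rw [Sdesc_eq_sum]
    apply Finset.sum_le_sum_of_subset_of_nonneg hsub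
    intro p hp _
    exact mul_nonneg (sq_nonneg _) (sint_nonneg hv (mem_DF_valid h00 hp))
  calc ∑ p ∈ s, (if p.2 < 2^p.1 then
        ENNReal.ofReal ((Dav f p.1 p.2) ^ 2) * ENNReal.ofReal (sint v p.1 p.2) else 0)
      = ∑ p ∈ s', ENNReal.ofReal (G p.1 p.2) := hstep1
    _ = ENNReal.ofReal (∑ p ∈ s', G p.1 p.2) := by
        rw [ENNReal.ofReal_sum_of_nonneg]
        intro p hp
        rw [hs', Finset.mem_filter] at hp
        exact mul_nonneg (sq_nonneg _) (sint_nonneg hv hp.2)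
    _ ≤ ENNReal.ofReal (Sdesc G N 0 0) := ENNReal.ofReal_le_ofReal hsum_le
    _ ≤ ENNReal.ofReal ((24*A) * Fq f w 0 0) := by
        apply ENNReal.ofReal_le_ofReal
        have := hard_core hv hw hf hfi hApos hA2 hCar' N
        calc Sdesc G N 0 0 ≤ 24*A*Fq f w 0 0 := this
          _ = (24*A) * Fq f w 0 0 := by ring

end Aux91

theorem theorem_9_1' (v w : ℝ → ℝ) (hv : IsWeight v) (hw : IsWeight w) :
    (∃ C : ℝ, 0 ≤ C ∧
        ∀ f : ℝ → ℝ, Measurable f →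
          IntegrableOn (fun x => (f x) ^ 2 / w x) (Set.Ico (0 : ℝ) 1) →
          (∫⁻ x in Set.Ico (0 : ℝ) 1, Ssq f x * ENNReal.ofReal (v x)) ≤
            ENNReal.ofReal (C * ∫ x in Set.Ico (0 : ℝ) 1, (f x) ^ 2 / w x)) ↔
      (∃ A : ℝ, 0 ≤ A ∧
        (∀ n k : ℕ, k < 2 ^ n → davg v n k * davg w n k ≤ A) ∧
        (∀ m j : ℕ, j < 2 ^ m →
          (∑' p : ℕ × ℕ,
              if dyad p.1 p.2 ⊆ dyad m j then
                ENNReal.ofReal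
                  ((davg w (p.1 + 1) (2 * p.2) - davg w (p.1 + 1) (2 * p.2 + 1)) ^ 2 *
                    davg v p.1 p.2 * dlen p.1)
              else 0) ≤
            ENNReal.ofReal (A * davg w m j * dlen m))) := by
  constructor
  · rintro ⟨C, hC0, hbd⟩
    exact ⟨C, hC0, fun n k hk => Aux91.easy_A2 hv hw hC0 hbd hk,
      fun m j hj => Aux91.easy_carleson hv hw hC0 hbd hj⟩
  · rintro ⟨A, hA0, hA2, hCar⟩
    exact ⟨24*A, by linarith, fun f hf hfi => Aux91.hard_dir hv hw hA0 hA2 hCar f hf hfi⟩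


/-- Theorem 9.1. -/
theorem theorem_9_1 (v w : ℝ → ℝ) (hv : IsWeight v) (hw : IsWeight w) :
    (∃ C : ℝ, 0 ≤ C ∧
        ∀ f : ℝ → ℝ, Measurable f →
          IntegrableOn (fun x => (f x) ^ 2 / w x) (Set.Ico (0 : ℝ) 1) →
          (∫⁻ x in Set.Ico (0 : ℝ) 1, Ssq f x * ENNReal.ofReal (v x)) ≤
            ENNReal.ofReal (C * ∫ x in Set.Ico (0 : ℝ) 1, (f x) ^ 2 / w x)) ↔
      (∃ A : ℝ, 0 ≤ A ∧
        (∀ n k : ℕ, k < 2 ^ n → davg v n k * davg w n k ≤ A) ∧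
        (∀ m j : ℕ, j < 2 ^ m →
          (∑' p : ℕ × ℕ,
              if dyad p.1 p.2 ⊆ dyad m j then
                ENNReal.ofReal
                  ((davg w (p.1 + 1) (2 * p.2) - davg w (p.1 + 1) (2 * p.2 + 1)) ^ 2 *
                    davg v p.1 p.2 * dlen p.1)
              else 0) ≤
            ENNReal.ofReal (A * davg w m j * dlen m))) :=
  theorem_9_1' v w hv hw

end
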